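/- Under the same hypotheses as the variable-coefficient backward estimate — Ω a bounded smooth domain in ℝ^N, T > 0, 1 < p ≤ 2, M : [0,T]×Ω → ℝ with 0 < a ≤ M ≤ b, C a T-independent L^p maximal-regularity constant for the backward heat equation with diffusivity (a+b)/2 and homogeneous Neumann boundary condition, and C·(b−a)/2 < 1 — any (sufficiently regular) solution v of ∂_t v + M Δ_x v = f on [0,T]×Ω with v(T,·) = 0 and homogeneous Neumann boundary condition satisfies ‖v(0,·)‖_{L^p(Ω)} ≤ (1 + b·D)·T^{1/p'}·‖f‖_{L^p([0,T]×Ω)}, where D = C/(1 − C·(b−a)/2) and p' is the Hölder conjugate of p. -/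

import Mathlib

open MeasureTheory Real Set Function
open scoped ENNReal

noncomputable section

/-- The Laplacian of `f : ℝ^N → ℝ`, computed as the sum of the second partial
derivatives in the coordinate directions. -/
def lapl {N : ℕ} (f : EuclideanSpace ℝ (Fin N) → ℝ) (x : EuclideanSpace ℝ (Fin N)) : ℝ :=
  ∑ i : Fin N, fderiv ℝ (fun y => fderiv ℝ f y (EuclideanSpace.single i 1)) x
    (EuclideanSpace.single i 1)

/-- The time derivative of `u : ℝ → ℝ^N → ℝ`. -/
def tderiv {N : ℕ} (u : ℝ → EuclideanSpace ℝ (Fin N) → ℝ) (t : ℝ)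
    (x : EuclideanSpace ℝ (Fin N)) : ℝ :=
  deriv (fun s => u s x) t

/-- The natural (product Lebesgue) measure on the parabolic cylinder `[0,T] × Ω`. -/
def cylMeasure {N : ℕ} (T : ℝ) (Ω : Set (EuclideanSpace ℝ (Fin N))) :
    Measure (ℝ × EuclideanSpace ℝ (Fin N)) :=
  (volume.restrict (Icc 0 T)).prod (volume.restrict Ω)


section AuxLemmas

variable {N : ℕ}


lemma slice_fderiv (v : ℝ → EuclideanSpace ℝ (Fin N) → ℝ)
    (hu : ContDiff ℝ 2 (uncurry v)) (t : ℝ) (x : EuclideanSpace ℝ (Fin N)) :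
    fderiv ℝ (v t) x = (fderiv ℝ (uncurry v) (t, x)).comp
      (ContinuousLinearMap.inr ℝ ℝ (EuclideanSpace ℝ (Fin N))) := by
  have h1 : HasFDerivAt (uncurry v) (fderiv ℝ (uncurry v) (t, x)) (t, x) :=
    ((hu.differentiable (by norm_num)) (t, x)).hasFDerivAt
  have h2 := hasFDerivAt_prodMk_right (𝕜 := ℝ) t x
  exact (h1.comp x h2).fderiv

lemma slice_hasDerivAt (v : ℝ → EuclideanSpace ℝ (Fin N) → ℝ)
    (hu : ContDiff ℝ 2 (uncurry v)) (x : EuclideanSpace ℝ (Fin N)) (t : ℝ) :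
    HasDerivAt (fun s => v s x) (fderiv ℝ (uncurry v) (t, x) (1, 0)) t := by
  have h1 : HasFDerivAt (uncurry v) (fderiv ℝ (uncurry v) (t, x)) (t, x) :=
    ((hu.differentiable (by norm_num)) (t, x)).hasFDerivAt
  have h2 := hasFDerivAt_prodMk_left (𝕜 := ℝ) t x
  have h3 := (h1.comp t h2).hasDerivAt
  exact h3

lemma tderiv_eq (v : ℝ → EuclideanSpace ℝ (Fin N) → ℝ)
    (hu : ContDiff ℝ 2 (uncurry v)) (t : ℝ) (x : EuclideanSpace ℝ (Fin N)) :
    tderiv v t x = fderiv ℝ (uncurry v) (t, x) (1, 0) :=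
  (slice_hasDerivAt v hu x t).deriv

lemma lapl_eq (v : ℝ → EuclideanSpace ℝ (Fin N) → ℝ)
    (hu : ContDiff ℝ 2 (uncurry v)) (t : ℝ) (x : EuclideanSpace ℝ (Fin N)) :
    lapl (v t) x = ∑ i : Fin N,
      fderiv ℝ (fderiv ℝ (uncurry v)) (t, x) (0, EuclideanSpace.single i 1)
        (0, EuclideanSpace.single i 1) := by
  unfold lapl
  refine Finset.sum_congr rfl fun i _ => ?_
  set e := EuclideanSpace.single (𝕜 := ℝ) i (1:ℝ)
  have hA : ContDiff ℝ 1 (fderiv ℝ (uncurry v)) := hu.fderiv_right (by norm_num)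
  have hfun : (fun y => fderiv ℝ (v t) y e)
      = fun y => (ContinuousLinearMap.apply ℝ ℝ ((0 : ℝ), e)) (fderiv ℝ (uncurry v) (t, y)) := by
    funext y
    rw [slice_fderiv v hu t y]
    rfl
  rw [hfun]
  have hAd : HasFDerivAt (fderiv ℝ (uncurry v)) (fderiv ℝ (fderiv ℝ (uncurry v)) (t, x)) (t, x) :=
    ((hA.differentiable one_ne_zero) (t, x)).hasFDerivAt
  have h2 := hasFDerivAt_prodMk_right (𝕜 := ℝ) t x
  have h3 := ((ContinuousLinearMap.apply ℝ ℝ ((0 : ℝ), e)).hasFDerivAt.comp (t, x) hAd)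
  have h4 := h3.comp x h2
  have h5 : HasFDerivAt
      (fun y => (ContinuousLinearMap.apply ℝ ℝ ((0 : ℝ), e)) (fderiv ℝ (uncurry v) (t, y)))
      ((((ContinuousLinearMap.apply ℝ ℝ) ((0:ℝ), e)).comp
        (fderiv ℝ (fderiv ℝ (uncurry v)) (t, x))).comp
        (ContinuousLinearMap.inr ℝ ℝ (EuclideanSpace ℝ (Fin N)))) x := h4
  rw [h5.fderiv]
  rfl

lemma cont_tderiv (v : ℝ → EuclideanSpace ℝ (Fin N) → ℝ)
    (hu : ContDiff ℝ 2 (uncurry v)) :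
    Continuous (fun z : ℝ × EuclideanSpace ℝ (Fin N) => tderiv v z.1 z.2) := by
  have : (fun z : ℝ × EuclideanSpace ℝ (Fin N) => tderiv v z.1 z.2)
      = fun z => (ContinuousLinearMap.apply ℝ ℝ ((1:ℝ), (0 : EuclideanSpace ℝ (Fin N))))
          (fderiv ℝ (uncurry v) z) := by
    funext z
    rw [tderiv_eq v hu z.1 z.2]
    rfl
  rw [this]
  exact (ContinuousLinearMap.apply ℝ ℝ _).continuous.comp (hu.continuous_fderiv (by norm_num))

lemma cont_lapl (v : ℝ → EuclideanSpace ℝ (Fin N) → ℝ)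
    (hu : ContDiff ℝ 2 (uncurry v)) :
    Continuous (fun z : ℝ × EuclideanSpace ℝ (Fin N) => lapl (v z.1) z.2) := by
  have hA : ContDiff ℝ 1 (fderiv ℝ (uncurry v)) := hu.fderiv_right (by norm_num)
  have hB := hA.continuous_fderiv one_ne_zero
  have : (fun z : ℝ × EuclideanSpace ℝ (Fin N) => lapl (v z.1) z.2)
      = fun z => ∑ i : Fin N,
        (ContinuousLinearMap.apply ℝ ℝ ((0:ℝ), EuclideanSpace.single i (1:ℝ)))
          ((ContinuousLinearMap.apply ℝ (ℝ × EuclideanSpace ℝ (Fin N) →L[ℝ] ℝ)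
              ((0:ℝ), EuclideanSpace.single i (1:ℝ)))
            (fderiv ℝ (fderiv ℝ (uncurry v)) z)) := by
    funext z
    rw [lapl_eq v hu z.1 z.2]
    rfl
  rw [this]
  exact continuous_finset_sum _ fun i _ =>
    (ContinuousLinearMap.apply ℝ ℝ _).continuous.comp
      ((ContinuousLinearMap.apply ℝ _ _).continuous.comp hB)

lemma stepB {N : ℕ} (T p pc : ℝ) (hT : 0 < T) (hconj : p.HolderConjugate pc)
    (Ω : Set (EuclideanSpace ℝ (Fin N))) (hΩmeas : MeasurableSet Ω)
    (v0 : EuclideanSpace ℝ (Fin N) → ℝ) (h : ℝ × EuclideanSpace ℝ (Fin N) → ℝ)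
    (hcont : Continuous h)
    (hv0 : ∀ x ∈ Ω, v0 x = ∫ s in (0:ℝ)..T, h (s, x)) :
    eLpNorm v0 (ENNReal.ofReal p) (volume.restrict Ω)
      ≤ ENNReal.ofReal (T ^ (1 / pc)) * eLpNorm h (ENNReal.ofReal p) (cylMeasure T Ω) := by
  have hp1 : 1 < p := hconj.lt
  have hp0 : 0 < p := hconj.pos
  have hq0 : ENNReal.ofReal p ≠ 0 := by
    simpa [ENNReal.ofReal_eq_zero, not_le] using hp0
  have hqt : ENNReal.ofReal p ≠ ⊤ := ENNReal.ofReal_ne_top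
  have hqtr : (ENNReal.ofReal p).toReal = p := ENNReal.toReal_ofReal hp0.le
  rw [eLpNorm_eq_lintegral_rpow_enorm_toReal hq0 hqt, eLpNorm_eq_lintegral_rpow_enorm_toReal hq0 hqt, hqtr]
  set ν := volume.restrict (Icc (0:ℝ) T) with hν
  set F : ℝ × EuclideanSpace ℝ (Fin N) → ℝ≥0∞ := fun z => (‖h z‖₊ : ℝ≥0∞) ^ p with hF
  have hFmeas : Measurable F := by
    exact (hcont.measurable.nnnorm.coe_nnreal_ennreal).pow_const _
  set J : EuclideanSpace ℝ (Fin N) → ℝ≥0∞ := fun x => ∫⁻ s, F (s, x) ∂ν with hJ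
  have hJmeas : Measurable J := by
    exact Measurable.lintegral_prod_left (μ := ν) (f := fun s x => F (s, x)) hFmeas
  -- pointwise bound for x ∈ Ω
  have key : ∀ x ∈ Ω, (‖v0 x‖₊ : ℝ≥0∞) ^ p ≤ ENNReal.ofReal (T ^ (1/pc)) ^ p * J x := by
    intro x hx
    have hhc : Continuous fun s => h (s, x) := hcont.comp (continuous_id.prodMk continuous_const)
    have habs : |v0 x| ≤ ∫ s in (0:ℝ)..T, |h (s, x)| := by
      rw [hv0 x hx]
      exact intervalIntegral.abs_integral_le_integral_abs hT.le
    have hint : IntegrableOn (fun s => |h (s, x)|) (Ioc 0 T) volume :=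
      (hhc.abs.integrableOn_Icc).mono_set Ioc_subset_Icc_self
    have h1 : ENNReal.ofReal (∫ s in (0:ℝ)..T, |h (s, x)|) = ∫⁻ s, (‖h (s, x)‖₊ : ℝ≥0∞) ∂ν := by
      rw [intervalIntegral.integral_of_le hT.le,
        ofReal_integral_eq_lintegral_ofReal hint
          (Filter.Eventually.of_forall fun s => abs_nonneg _)]
      rw [hν, ← Measure.restrict_congr_set (Ioc_ae_eq_Icc (a := (0:ℝ)) (b := T))]
      refine lintegral_congr fun s => ?_
      rw [← enorm_eq_nnnorm, Real.enorm_eq_ofReal_abs]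
    have h2 : (‖v0 x‖₊ : ℝ≥0∞) ≤ ∫⁻ s, (‖h (s, x)‖₊ : ℝ≥0∞) ∂ν := by
      rw [← enorm_eq_nnnorm, Real.enorm_eq_ofReal_abs, ← h1]
      exact ENNReal.ofReal_le_ofReal habs
    -- Hölder
    have hmeas1 : AEMeasurable (fun s => (‖h (s, x)‖₊ : ℝ≥0∞)) ν :=
      (hhc.measurable.nnnorm.coe_nnreal_ennreal).aemeasurable
    have h3 : ∫⁻ s, (‖h (s, x)‖₊ : ℝ≥0∞) ∂ν
        ≤ (∫⁻ s, (‖h (s, x)‖₊ : ℝ≥0∞) ^ p ∂ν) ^ (1/p) * (∫⁻ s, (1:ℝ≥0∞) ∂ν) ^ (1/pc) := by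
      have := ENNReal.lintegral_mul_le_Lp_mul_Lq ν hconj hmeas1 aemeasurable_const
        (g := fun _ => (1:ℝ≥0∞))
      simpa using this
    have hν1 : ∫⁻ _, (1:ℝ≥0∞) ∂ν = ENNReal.ofReal T := by
      rw [hν, setLIntegral_one, Real.volume_Icc]; norm_num
    have h4 : (‖v0 x‖₊ : ℝ≥0∞) ≤ (J x) ^ (1/p) * ENNReal.ofReal (T ^ (1/pc)) := by
      refine (h2.trans h3).trans ?_
      rw [hν1, ← ENNReal.ofReal_rpow_of_pos hT]
    calc (‖v0 x‖₊ : ℝ≥0∞) ^ p ≤ ((J x) ^ (1/p) * ENNReal.ofReal (T ^ (1/pc))) ^ p :=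
          ENNReal.rpow_le_rpow h4 hp0.le
      _ = ENNReal.ofReal (T ^ (1/pc)) ^ p * J x := by
          rw [ENNReal.mul_rpow_of_nonneg _ _ hp0.le, ← ENNReal.rpow_mul, one_div,
            inv_mul_cancel₀ hp0.ne', ENNReal.rpow_one, mul_comm]
  -- integrate over Ω
  have hint2 : ∫⁻ x in Ω, (‖v0 x‖₊ : ℝ≥0∞) ^ p ∂volume
      ≤ ENNReal.ofReal (T ^ (1/pc)) ^ p * ∫⁻ x in Ω, J x ∂volume := by
    rw [← lintegral_const_mul _ hJmeas]
    exact setLIntegral_mono (by exact (measurable_const.mul hJmeas)) key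
  have hTon : ∫⁻ x in Ω, J x ∂volume = ∫⁻ z, F z ∂(cylMeasure T Ω) := by
    rw [cylMeasure]
    rw [lintegral_prod F hFmeas.aemeasurable]
    exact lintegral_lintegral_swap (μ := volume.restrict Ω) (ν := ν)
      (f := fun x s => F (s, x)) (hFmeas.comp measurable_swap).aemeasurable
  calc (∫⁻ x in Ω, (‖v0 x‖₊ : ℝ≥0∞) ^ p ∂volume) ^ (1/p)
      ≤ (ENNReal.ofReal (T ^ (1/pc)) ^ p * ∫⁻ z, F z ∂(cylMeasure T Ω)) ^ (1/p) := by
        rw [← hTon]; exact ENNReal.rpow_le_rpow hint2 (by positivity)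
    _ = ENNReal.ofReal (T ^ (1/pc)) * (∫⁻ z, F z ∂(cylMeasure T Ω)) ^ (1/p) := by
        rw [ENNReal.mul_rpow_of_nonneg _ _ (by positivity), ← ENNReal.rpow_mul,
          mul_one_div, div_self hp0.ne', ENNReal.rpow_one]


lemma absorb (C ε : ℝ) (hC : 0 < C) (hε : 0 ≤ ε) (hsmall : C * ε < 1)
    (X F : ℝ≥0∞) (hXfin : X ≠ ⊤)
    (hX : X ≤ ENNReal.ofReal C * (F + ENNReal.ofReal ε * X)) :
    X ≤ ENNReal.ofReal (C / (1 - C * ε)) * F := by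
  have hden : 0 < 1 - C * ε := by linarith
  by_cases hF : F = ⊤
  · rw [hF, ENNReal.mul_top (by simp [ENNReal.ofReal_eq_zero, not_le]; positivity)]
    exact le_top
  · set x := X.toReal with hx
    set f := F.toReal with hf
    have hfin2 : ENNReal.ofReal C * (F + ENNReal.ofReal ε * X) ≠ ⊤ := by
      refine ENNReal.mul_ne_top ENNReal.ofReal_ne_top ?_
      exact ENNReal.add_ne_top.2 ⟨hF, ENNReal.mul_ne_top ENNReal.ofReal_ne_top hXfin⟩
    have hreal : x ≤ C * (f + ε * x) := by
      have := ENNReal.toReal_mono hfin2 hX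
      rwa [ENNReal.toReal_mul, ENNReal.toReal_add hF
        (ENNReal.mul_ne_top ENNReal.ofReal_ne_top hXfin), ENNReal.toReal_mul,
        ENNReal.toReal_ofReal hC.le, ENNReal.toReal_ofReal hε] at this
    have hxf : 0 ≤ f := ENNReal.toReal_nonneg
    have hxx : 0 ≤ x := ENNReal.toReal_nonneg
    have hgoal : x ≤ C / (1 - C * ε) * f := by
      rw [div_mul_eq_mul_div, le_div_iff₀ hden]
      nlinarith
    calc X = ENNReal.ofReal x := (ENNReal.ofReal_toReal hXfin).symm
      _ ≤ ENNReal.ofReal (C / (1 - C * ε) * f) := ENNReal.ofReal_le_ofReal hgoal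
      _ = ENNReal.ofReal (C / (1 - C * ε)) * ENNReal.ofReal f :=
          ENNReal.ofReal_mul (by positivity)
      _ = ENNReal.ofReal (C / (1 - C * ε)) * F := by rw [hf, ENNReal.ofReal_toReal hF]

end AuxLemmas

/-- Lemma 2.3, second estimate.  Under the same hypotheses as the
variable-coefficient backward estimate, any sufficiently regular solution `v` of
`∂ₜ v + M Δ v = f` on `[0,T] × Ω` with `v(T,·) = 0` and homogeneous Neumann boundary
conditions satisfies `‖v(0,·)‖_{L^p(Ω)} ≤ (1 + b D) T^{1/p'} ‖f‖_{L^p(Ω_T)}` where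
`D = C/(1 - C (b-a)/2)` and `p'` is the Hölder conjugate of `p`. -/
theorem stmt_3
    (N : ℕ) (Ω : Set (EuclideanSpace ℝ (Fin N))) (φ : EuclideanSpace ℝ (Fin N) → ℝ)
    (hΩopen : IsOpen Ω) (hΩbdd : Bornology.IsBounded Ω) (hΩne : Ω.Nonempty)
    (hφ : ContDiff ℝ 2 φ) (hΩφ : Ω = {x | φ x < 0})
    (hφgrad : ∀ x ∈ frontier Ω, gradient φ x ≠ 0)
    (T : ℝ) (hT : 0 < T)
    (p pc : ℝ) (hp1 : 1 < p) (hp2 : p ≤ 2) (hpc : 1 / p + 1 / pc = 1)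
    (M : ℝ → EuclideanSpace ℝ (Fin N) → ℝ)
    (a b : ℝ) (ha : 0 < a) (hab : a ≤ b)
    (hM : ∀ t ∈ Icc (0 : ℝ) T, ∀ x ∈ Ω, a ≤ M t x ∧ M t x ≤ b)
    (C : ℝ) (hC : 0 < C)
    -- `C` is a T-independent `L^p` maximal regularity constant for the backward heat
    -- equation with diffusivity `(a+b)/2` and Neumann boundary conditions:
    (hmaxreg : ∀ T' > (0 : ℝ), ∀ w g : ℝ → EuclideanSpace ℝ (Fin N) → ℝ,
      ContDiff ℝ 2 (uncurry w) →
      (∀ t ∈ Icc (0 : ℝ) T', ∀ x ∈ Ω,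
        tderiv w t x + ((a + b) / 2) * lapl (w t) x = g t x) →
      (∀ x ∈ Ω, w T' x = 0) →
      (∀ t ∈ Icc (0 : ℝ) T', ∀ x ∈ frontier Ω, fderiv ℝ (w t) x (gradient φ x) = 0) →
      eLpNorm (fun z : ℝ × EuclideanSpace ℝ (Fin N) => lapl (w z.1) z.2)
          (ENNReal.ofReal p) (cylMeasure T' Ω)
        ≤ ENNReal.ofReal C *
          eLpNorm (fun z : ℝ × EuclideanSpace ℝ (Fin N) => g z.1 z.2)
            (ENNReal.ofReal p) (cylMeasure T' Ω))
    (hsmall : C * ((b - a) / 2) < 1)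
    (v f : ℝ → EuclideanSpace ℝ (Fin N) → ℝ)
    -- sufficient regularity of the solution
    (hreg : ContDiff ℝ 2 (uncurry v))
    -- the equation `∂ₜ v + M Δ v = f` on `[0,T] × Ω`
    (hpde : ∀ t ∈ Icc (0 : ℝ) T, ∀ x ∈ Ω,
      tderiv v t x + M t x * lapl (v t) x = f t x)
    -- final condition `v(T,·) = 0`
    (hfinal : ∀ x ∈ Ω, v T x = 0)
    -- homogeneous Neumann boundary condition
    (hbc : ∀ t ∈ Icc (0 : ℝ) T, ∀ x ∈ frontier Ω, fderiv ℝ (v t) x (gradient φ x) = 0) :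
    eLpNorm (v 0) (ENNReal.ofReal p) (volume.restrict Ω)
      ≤ ENNReal.ofReal ((1 + b * (C / (1 - C * ((b - a) / 2)))) * T ^ (1 / pc)) *
        eLpNorm (fun z : ℝ × EuclideanSpace ℝ (Fin N) => f z.1 z.2)
          (ENNReal.ofReal p) (cylMeasure T Ω) := by
  classical
  set q : ℝ≥0∞ := ENNReal.ofReal p with hqdef
  have hp0 : (0:ℝ) < p := lt_trans one_pos hp1
  have hq1 : 1 ≤ q := by rw [hqdef]; exact ENNReal.one_le_ofReal.2 hp1.le
  have hconj : p.HolderConjugate pc := Real.holderConjugate_iff.mpr ⟨hp1, by rw [inv_eq_one_div, inv_eq_one_div]; exact hpc⟩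
  set c : ℝ := (a + b) / 2 with hcdef
  set ε : ℝ := (b - a) / 2 with hεdef
  have hε : 0 ≤ ε := by rw [hεdef]; linarith
  have hc : 0 ≤ c := by rw [hcdef]; linarith
  set μ := cylMeasure T Ω with hμdef
  set L : ℝ × EuclideanSpace ℝ (Fin N) → ℝ := fun z => lapl (v z.1) z.2 with hLdef
  set g : ℝ → EuclideanSpace ℝ (Fin N) → ℝ :=
    fun t x => tderiv v t x + c * lapl (v t) x with hgdef
  set G : ℝ × EuclideanSpace ℝ (Fin N) → ℝ := fun z => g z.1 z.2 with hGdef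
  have contL : Continuous L := cont_lapl v hreg
  have contDt : Continuous (fun z : ℝ × EuclideanSpace ℝ (Fin N) => tderiv v z.1 z.2) :=
    cont_tderiv v hreg
  have contG : Continuous G := contDt.add (continuous_const.mul contL)
  -- a.e. membership in the cylinder
  have hμres : μ = (volume.prod volume).restrict (Icc 0 T ×ˢ Ω) := by
    rw [hμdef, cylMeasure, Measure.prod_restrict]
  have hae : ∀ᵐ z : ℝ × EuclideanSpace ℝ (Fin N) ∂μ, z.1 ∈ Icc (0:ℝ) T ∧ z.2 ∈ Ω := by
    rw [hμres]
    filter_upwards [ae_restrict_mem (measurableSet_Icc.prod hΩopen.measurableSet)] with z hz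
    exact hz
  -- maximal regularity applied to v with RHS G
  have hL0 : eLpNorm L q μ ≤ ENNReal.ofReal C * eLpNorm G q μ :=
    hmaxreg T hT v g hreg (fun t _ x _ => rfl) hfinal hbc
  -- finite measure instances
  haveI hfin1 : IsFiniteMeasure (volume.restrict (Icc (0:ℝ) T)) :=
    ⟨by rw [Measure.restrict_apply_univ, Real.volume_Icc]; exact ENNReal.ofReal_lt_top⟩
  haveI hfin2 : IsFiniteMeasure (volume.restrict Ω) :=
    ⟨by rw [Measure.restrict_apply_univ]; exact hΩbdd.measure_lt_top⟩
  haveI hfinμ : IsFiniteMeasure μ := by rw [hμdef, cylMeasure]; infer_instance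
  -- finiteness of ‖L‖
  have hLfin : eLpNorm L q μ ≠ ⊤ := by
    have hK : IsCompact (Icc (0:ℝ) T ×ˢ closure Ω) :=
      isCompact_Icc.prod hΩbdd.isCompact_closure
    obtain ⟨R, hR⟩ := hK.exists_bound_of_continuousOn contL.continuousOn
    have hbd : ∀ᵐ z ∂μ, ‖L z‖ ≤ R := by
      filter_upwards [hae] with z hz
      exact hR z ⟨hz.1, subset_closure hz.2⟩
    refine ne_of_lt (lt_of_le_of_lt (eLpNorm_le_of_ae_bound hbd) ?_)
    exact ENNReal.mul_lt_top
      (ENNReal.rpow_lt_top_of_nonneg (by positivity) (measure_ne_top μ _))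
      ENNReal.ofReal_lt_top
  set Fn := eLpNorm (fun z : ℝ × EuclideanSpace ℝ (Fin N) => f z.1 z.2) q μ with hFndef
  -- ‖G‖ ≤ ‖f‖ + ε ‖L‖
  have habsL : eLpNorm (fun z => ε * |L z|) q μ = ENNReal.ofReal ε * eLpNorm L q μ := by
    have h1 : (fun z : ℝ × EuclideanSpace ℝ (Fin N) => ε * |L z|)
        = ε • (fun z => ‖L z‖) := by
      funext z; simp [Real.norm_eq_abs]
    rw [h1, eLpNorm_const_smul, eLpNorm_norm, Real.enorm_eq_ofReal_abs, abs_of_nonneg hε]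
  have hGf : eLpNorm G q μ ≤ Fn + ENNReal.ofReal ε * eLpNorm L q μ := by
    set Fm : ℝ × EuclideanSpace ℝ (Fin N) → ℝ := fun z => max (|G z| - ε * |L z|) 0 with hFmdef
    have contFm : Continuous Fm := (contG.abs.sub (continuous_const.mul contL.abs)).max
      continuous_const
    have step1 : eLpNorm G q μ ≤ eLpNorm (fun z => Fm z + ε * |L z|) q μ := by
      refine eLpNorm_mono fun z => ?_
      have h1 : |G z| - ε * |L z| ≤ Fm z := le_max_left _ _
      have h2 : (0:ℝ) ≤ Fm z := le_max_right _ _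
      have h3 : 0 ≤ ε * |L z| := by positivity
      rw [Real.norm_eq_abs (G z),
        Real.norm_of_nonneg (show (0:ℝ) ≤ Fm z + ε * |L z| by linarith)]
      linarith
    have step2 : eLpNorm (fun z => Fm z + ε * |L z|) q μ
        ≤ eLpNorm Fm q μ + eLpNorm (fun z => ε * |L z|) q μ := by
      exact eLpNorm_add_le contFm.aestronglyMeasurable
        ((continuous_const.mul contL.abs)).aestronglyMeasurable hq1
    have step3 : eLpNorm Fm q μ ≤ Fn := by
      refine eLpNorm_mono_ae ?_
      filter_upwards [hae] with z hz
      obtain ⟨hz1, hz2⟩ := hz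
      have hpde' := hpde z.1 hz1 z.2 hz2
      obtain ⟨hMa, hMb⟩ := hM z.1 hz1 z.2 hz2
      have hMc : |M z.1 z.2 - c| ≤ ε := by
        rw [abs_le]; constructor <;> [skip; skip] <;> simp only [hcdef, hεdef] <;> linarith
      have hfe : f z.1 z.2 = G z + (M z.1 z.2 - c) * L z := by
        simp only [hGdef, hgdef, hLdef]
        linarith
      have hG1 : |G z| ≤ |f z.1 z.2| + ε * |L z| := by
        have : G z = f z.1 z.2 - (M z.1 z.2 - c) * L z := by linarith
        calc |G z| ≤ |f z.1 z.2| + |(M z.1 z.2 - c) * L z| := by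
              rw [this]; exact abs_sub _ _
          _ ≤ |f z.1 z.2| + ε * |L z| := by
              rw [abs_mul]
              have := mul_le_mul_of_nonneg_right hMc (abs_nonneg (L z))
              linarith
      rw [Real.norm_eq_abs, Real.norm_eq_abs, hFmdef]
      rw [abs_of_nonneg (le_max_right _ _)]
      exact max_le (by linarith) (abs_nonneg _)
    calc eLpNorm G q μ ≤ eLpNorm Fm q μ + eLpNorm (fun z => ε * |L z|) q μ :=
          step1.trans step2
      _ ≤ Fn + ENNReal.ofReal ε * eLpNorm L q μ := by
          rw [habsL]; exact add_le_add_left step3 _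
  -- absorption: ‖L‖ ≤ D ‖f‖
  have hεsmall : C * ε < 1 := hsmall
  have hLD : eLpNorm L q μ ≤ ENNReal.ofReal (C / (1 - C * ε)) * Fn :=
    absorb C ε hC hε hεsmall _ _ hLfin
      (hL0.trans (mul_le_mul_right hGf _))
  -- FTC representation of v 0
  set h : ℝ × EuclideanSpace ℝ (Fin N) → ℝ := fun z => c * L z - G z with hhdef
  have conth : Continuous h := (continuous_const.mul contL).sub contG
  have hv0 : ∀ x ∈ Ω, v 0 x = ∫ s in (0:ℝ)..T, h (s, x) := by
    intro x hx
    have hd : ∀ s ∈ uIcc (0:ℝ) T, HasDerivAt (fun s => v s x) (tderiv v s x) s := by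
      intro s _
      rw [tderiv_eq v hreg]
      exact slice_hasDerivAt v hreg x s
    have hint : IntervalIntegrable (fun s => tderiv v s x) volume 0 T :=
      (contDt.comp (continuous_id.prodMk continuous_const)).intervalIntegrable 0 T
    have hftc := intervalIntegral.integral_eq_sub_of_hasDerivAt hd hint
    rw [hfinal x hx, zero_sub] at hftc
    have hcongr : (fun s => h (s, x)) = fun s => -(tderiv v s x) := by
      funext s
      show c * lapl (v s) x - (tderiv v s x + c * lapl (v s) x) = -(tderiv v s x)
      ring
    rw [hcongr, intervalIntegral.integral_neg, hftc, neg_neg]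
  -- Step B
  have hB := stepB T p pc hT hconj Ω hΩopen.measurableSet (v 0) h conth hv0
  -- combine
  have hh1 : eLpNorm h q μ ≤ ENNReal.ofReal c * eLpNorm L q μ + eLpNorm G q μ := by
    have h1 : h = (fun z => c * L z) - G := rfl
    have h2 : eLpNorm (fun z => c * L z) q μ = ENNReal.ofReal c * eLpNorm L q μ := by
      have h3 : (fun z : ℝ × EuclideanSpace ℝ (Fin N) => c * L z) = c • L := rfl
      rw [h3, eLpNorm_const_smul, Real.enorm_eq_ofReal_abs, abs_of_nonneg hc]
    rw [h1, ← h2]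
    exact eLpNorm_sub_le (continuous_const.mul contL).aestronglyMeasurable
      contG.aestronglyMeasurable hq1
  set D : ℝ := C / (1 - C * ε) with hDdef
  have hD : 0 ≤ D := by
    rw [hDdef]
    have : 0 < 1 - C * ε := by linarith
    positivity
  have hb : 0 ≤ b := le_trans ha.le hab
  have hcε : c + ε = b := by rw [hcdef, hεdef]; ring
  have hh2 : eLpNorm h q μ ≤ ENNReal.ofReal (1 + b * D) * Fn := by
    calc eLpNorm h q μ ≤ ENNReal.ofReal c * eLpNorm L q μ + eLpNorm G q μ := hh1
      _ ≤ ENNReal.ofReal c * eLpNorm L q μ + (Fn + ENNReal.ofReal ε * eLpNorm L q μ) :=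
          add_le_add_right hGf _
      _ = Fn + (ENNReal.ofReal c + ENNReal.ofReal ε) * eLpNorm L q μ := by ring
      _ = Fn + ENNReal.ofReal b * eLpNorm L q μ := by
          rw [← ENNReal.ofReal_add hc hε, hcε]
      _ ≤ Fn + ENNReal.ofReal b * (ENNReal.ofReal D * Fn) :=
          add_le_add_right (mul_le_mul_right hLD _) _
      _ = (1 + ENNReal.ofReal (b * D)) * Fn := by
          rw [ENNReal.ofReal_mul hb]; ring
      _ = ENNReal.ofReal (1 + b * D) * Fn := by
          rw [ENNReal.ofReal_add one_pos.le (by positivity), ENNReal.ofReal_one]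
  have hTpow : 0 ≤ T ^ (1 / pc) := Real.rpow_nonneg hT.le _
  calc eLpNorm (v 0) q (volume.restrict Ω)
      ≤ ENNReal.ofReal (T ^ (1 / pc)) * eLpNorm h q μ := hB
    _ ≤ ENNReal.ofReal (T ^ (1 / pc)) * (ENNReal.ofReal (1 + b * D) * Fn) :=
        mul_le_mul_right hh2 _
    _ = ENNReal.ofReal ((1 + b * D) * T ^ (1 / pc)) * Fn := by
        rw [← mul_assoc, ← ENNReal.ofReal_mul hTpow, mul_comm (T ^ (1 / pc))]
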